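/- Let K be a finite index set, let C, C^R, C^I > 0, let d : K → ℂ with Re d_k ≥ 0, Im d_k ≥ 0, |d_k| ≤ C, Re d_k ≤ C^R and Im d_k ≤ C^I for every k ∈ K, and let v : K → ℝ with v_k > 0 for every k. Define OPT₁ as the maximum of Σ_{k∈S₁} v_k over all S₁ ⊆ K with Re(Σ_{k∈S₁} d_k) + Im(Σ_{k∈S₁} d_k) ≤ C, Re(Σ_{k∈S₁} d_k) ≤ C^R and Im(Σ_{k∈S₁} d_k) ≤ C^I; define V₂ as the maximum of v_k over all k ∈ K with Re d_k + Im d_k > C (with V₂ = 0 if no such k exists). Then for every S ⊆ K with |Σ_{k∈S} d_k| ≤ C, Re(Σ_{k∈S} d_k) ≤ C^R and Im(Σ_{k∈S} d_k) ≤ C^I, one has Σ_{k∈S} v_k ≤ 2 · max(OPT₁, V₂). -/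

import Mathlib

/-- Combinatorial core of Theorem 5 (GC-KP): for any feasible GC-KP solution
`S`, its value is at most `2 · max(OPT₁, V₂)`, where `OPT₁` is the optimal
value over solutions whose demand sum lies in the polygonal region `D₁`, and
`V₂` is the best value of a single item whose demand satisfies
`Re + Im > C` (zero if there is none). -/
theorem gckp_value_bound {K : Type*} [Fintype K] (C CR CI : ℝ)
    (hC : 0 < C) (hCR : 0 < CR) (hCI : 0 < CI)
    (d : K → ℂ) (hre : ∀ k, 0 ≤ (d k).re) (him : ∀ k, 0 ≤ (d k).im)
    (hmag : ∀ k, ‖d k‖ ≤ C)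
    (hdR : ∀ k, (d k).re ≤ CR) (hdI : ∀ k, (d k).im ≤ CI)
    (v : K → ℝ) (hv : ∀ k, 0 < v k)
    (OPT₁ V₂ : ℝ)
    (hOPT₁ : OPT₁ = sSup {x : ℝ | ∃ S₁ : Finset K,
      ((∑ k ∈ S₁, d k).re + (∑ k ∈ S₁, d k).im ≤ C ∧
        (∑ k ∈ S₁, d k).re ≤ CR ∧ (∑ k ∈ S₁, d k).im ≤ CI) ∧
      x = ∑ k ∈ S₁, v k})
    (hV₂ : V₂ = sSup (insert 0 {x : ℝ | ∃ k : K, C < (d k).re + (d k).im ∧ x = v k}))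
    (S : Finset K) (hS : ‖∑ k ∈ S, d k‖ ≤ C)
    (hSR : (∑ k ∈ S, d k).re ≤ CR) (hSI : (∑ k ∈ S, d k).im ≤ CI) :
    ∑ k ∈ S, v k ≤ 2 * max OPT₁ V₂ := by
  classical
  set g : K → ℝ := fun k => (d k).re + (d k).im with hg
  have hg0 : ∀ k, 0 ≤ g k := fun k => add_nonneg (hre k) (him k)
  have hresum : ∀ T : Finset K, (∑ k ∈ T, d k).re = ∑ k ∈ T, (d k).re :=
    fun T => Complex.re_sum T d
  have himsum : ∀ T : Finset K, (∑ k ∈ T, d k).im = ∑ k ∈ T, (d k).im :=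
    fun T => Complex.im_sum T d
  -- the OPT₁ set is bounded above
  have hBddO : BddAbove {x : ℝ | ∃ S₁ : Finset K,
      ((∑ k ∈ S₁, d k).re + (∑ k ∈ S₁, d k).im ≤ C ∧
        (∑ k ∈ S₁, d k).re ≤ CR ∧ (∑ k ∈ S₁, d k).im ≤ CI) ∧
      x = ∑ k ∈ S₁, v k} := by
    refine ⟨∑ k, v k, ?_⟩
    rintro x ⟨T, -, rfl⟩
    exact Finset.sum_le_sum_of_subset_of_nonneg (Finset.subset_univ T)
      (fun k _ _ => (hv k).le)
  -- any subset of S with g-sum ≤ C has value ≤ OPT₁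
  have key : ∀ T : Finset K, T ⊆ S → ∑ k ∈ T, g k ≤ C → ∑ k ∈ T, v k ≤ OPT₁ := by
    intro T hTS hTC
    rw [hOPT₁]
    apply le_csSup hBddO
    refine ⟨T, ⟨?_, ?_, ?_⟩, rfl⟩
    · rw [hresum, himsum, ← Finset.sum_add_distrib]; exact hTC
    · rw [hresum]
      calc ∑ k ∈ T, (d k).re ≤ ∑ k ∈ S, (d k).re :=
            Finset.sum_le_sum_of_subset_of_nonneg hTS (fun k _ _ => hre k)
        _ = (∑ k ∈ S, d k).re := (hresum S).symm
        _ ≤ CR := hSR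
    · rw [himsum]
      calc ∑ k ∈ T, (d k).im ≤ ∑ k ∈ S, (d k).im :=
            Finset.sum_le_sum_of_subset_of_nonneg hTS (fun k _ _ => him k)
        _ = (∑ k ∈ S, d k).im := (himsum S).symm
        _ ≤ CI := hSI
  -- √2 ≤ 3/2
  have hs2 : Real.sqrt 2 ^ 2 = 2 := Real.sq_sqrt (by norm_num)
  have hsn : 0 ≤ Real.sqrt 2 := Real.sqrt_nonneg 2
  have hs15 : Real.sqrt 2 ≤ 3 / 2 := by nlinarith
  -- total g-sum over S is at most √2 · C
  have hSsum : ∑ k ∈ S, g k ≤ Real.sqrt 2 * C := by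
    have hgeq : ∑ k ∈ S, g k = (∑ k ∈ S, d k).re + (∑ k ∈ S, d k).im := by
      rw [hresum, himsum, ← Finset.sum_add_distrib]
    rw [hgeq]
    set a := (∑ k ∈ S, d k).re with ha
    set b := (∑ k ∈ S, d k).im with hb
    have ha0 : 0 ≤ a := by rw [ha, hresum]; exact Finset.sum_nonneg fun k _ => hre k
    have hb0 : 0 ≤ b := by rw [hb, himsum]; exact Finset.sum_nonneg fun k _ => him k
    have habs : a ^ 2 + b ^ 2 ≤ C ^ 2 := by
      have h1 : ‖∑ k ∈ S, d k‖ ^ 2 ≤ C ^ 2 := by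
        have := norm_nonneg (∑ k ∈ S, d k)
        nlinarith
      rw [Complex.sq_norm, Complex.normSq_apply] at h1
      nlinarith
    have h1 : (a + b) ^ 2 ≤ (Real.sqrt 2 * C) ^ 2 := by
      rw [mul_pow, hs2]; nlinarith [sq_nonneg (a - b)]
    calc a + b = Real.sqrt ((a + b) ^ 2) := (Real.sqrt_sq (by positivity)).symm
      _ ≤ Real.sqrt ((Real.sqrt 2 * C) ^ 2) := Real.sqrt_le_sqrt h1
      _ = Real.sqrt 2 * C := Real.sqrt_sq (by positivity)
  by_cases h : ∃ k ∈ S, C < g k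
  · -- a heavy item exists in S
    obtain ⟨k, hkS, hk⟩ := h
    -- V₂ set bounded above
    have hBddV : BddAbove (insert 0 {x : ℝ | ∃ k : K, C < (d k).re + (d k).im ∧ x = v k}) := by
      refine ⟨∑ k, v k, ?_⟩
      intro x hx
      rcases hx with rfl | ⟨j, -, rfl⟩
      · exact Finset.sum_nonneg fun j _ => (hv j).le
      · exact Finset.single_le_sum (fun j _ => (hv j).le) (Finset.mem_univ j)
    have hvV : v k ≤ V₂ := by
      rw [hV₂]
      exact le_csSup hBddV (Set.mem_insert_of_mem _ ⟨k, hk, rfl⟩)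
    have herase : ∑ j ∈ S.erase k, g j ≤ C := by
      have hsek : ∑ j ∈ S.erase k, g j + g k = ∑ j ∈ S, g j :=
        Finset.sum_erase_add S g hkS
      nlinarith
    have hval := key (S.erase k) (Finset.erase_subset k S) herase
    have hsplit : ∑ j ∈ S.erase k, v j + v k = ∑ j ∈ S, v j :=
      Finset.sum_erase_add S v hkS
    have h1 : OPT₁ ≤ max OPT₁ V₂ := le_max_left _ _
    have h2 : V₂ ≤ max OPT₁ V₂ := le_max_right _ _
    linarith
  · -- all items in S are light
    push_neg at h
    set P := S.powerset.filter (fun T => ∑ k ∈ T, g k ≤ C) with hP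
    have hPne : P.Nonempty := ⟨∅, by simp [hP, hC.le]⟩
    obtain ⟨T, hTP, hTmax⟩ := P.exists_max_image (fun T => ∑ k ∈ T, g k) hPne
    have hTS : T ⊆ S := Finset.mem_powerset.mp (Finset.mem_filter.mp hTP).1
    have hTC : ∑ k ∈ T, g k ≤ C := (Finset.mem_filter.mp hTP).2
    have hrest : ∑ k ∈ S \ T, g k ≤ C := by
      by_contra hgt
      push_neg at hgt
      have hpos : ∃ k ∈ S \ T, (0:ℝ) < g k := by
        have h0 : ∑ k ∈ S \ T, (0:ℝ) < ∑ k ∈ S \ T, g k := by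
          simpa using lt_trans hC hgt
        exact Finset.exists_lt_of_sum_lt h0
      obtain ⟨k, hkmem, hkpos⟩ := hpos
      obtain ⟨hkS, hkT⟩ := Finset.mem_sdiff.mp hkmem
      -- {k} is a candidate, so g k ≤ sum over T
      have hsing : {k} ∈ P := by
        refine Finset.mem_filter.mpr ⟨Finset.mem_powerset.mpr ?_, ?_⟩
        · simpa using hkS
        · simpa using h k hkS
      have hgk_le : g k ≤ ∑ j ∈ T, g j := by
        have := hTmax {k} hsing
        simpa using this
      -- inserting k would exceed C
      have hins : C < ∑ j ∈ T, g j + g k := by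
        by_contra hle
        push_neg at hle
        have hmem : insert k T ∈ P := by
          refine Finset.mem_filter.mpr ⟨Finset.mem_powerset.mpr ?_, ?_⟩
          · exact Finset.insert_subset hkS hTS
          · rw [Finset.sum_insert hkT]; linarith
        have := hTmax _ hmem
        rw [Finset.sum_insert hkT] at this
        linarith
      have hsdiff : ∑ j ∈ S \ T, g j + ∑ j ∈ T, g j = ∑ j ∈ S, g j :=
        Finset.sum_sdiff hTS
      nlinarith
    have h1 := key T hTS hTC
    have h2 := key (S \ T) (Finset.sdiff_subset) hrest
    have hsplit : ∑ j ∈ S \ T, v j + ∑ j ∈ T, v j = ∑ j ∈ S, v j :=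
      Finset.sum_sdiff hTS
    have h3 : OPT₁ ≤ max OPT₁ V₂ := le_max_left _ _
    linarith
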